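/- Let p = (p_1, p_2, ...) and q = (q_1, q_2, ...) be probability distributions on ℕ with entries in nonincreasing order such that p majorizes q (i.e., Σ_{i=1}^k p_i ≥ Σ_{i=1}^k q_i for all k). Then the Shannon entropy satisfies H(p) ≤ H(q). -/

import Mathlib

set_option maxHeartbeats 1000000

lemma ptwise' {x y : ℝ} (hx : 0 ≤ x) (hy : 0 < y) :
    Real.negMulLog x ≤ Real.negMulLog y + (-Real.log y - 1) * (x - y) := by
  rcases eq_or_lt_of_le hx with h | h
  · simp [Real.negMulLog, ← h]
    nlinarith [Real.log_le_sub_one_of_pos hy]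
  · have h1 : Real.log (y / x) ≤ y / x - 1 := Real.log_le_sub_one_of_pos (by positivity)
    rw [Real.log_div (ne_of_gt hy) (ne_of_gt h)] at h1
    have h2 : x * (Real.log y - Real.log x) ≤ y - x := by
      have := mul_le_mul_of_nonneg_left h1 (le_of_lt h)
      calc x * (Real.log y - Real.log x) ≤ x * (y / x - 1) := this
        _ = y - x := by field_simp
    simp only [Real.negMulLog]
    nlinarith

lemma abel' (c d : ℕ → ℝ) :
    ∀ m, (∀ i j, i ≤ j → j < m → c i ≤ c j) →
    (∀ k, k ≤ m → 0 ≤ ∑ i ∈ Finset.range k, d i) →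
    ∀ C, (∀ i, i < m → c i ≤ C) →
    ∑ i ∈ Finset.range m, c i * d i ≤ C * ∑ i ∈ Finset.range m, d i := by
  intro m
  induction m with
  | zero => simp
  | succ m ih =>
    intro hmono hS C hC
    have h1 : ∑ i ∈ Finset.range m, c i * d i ≤ c m * ∑ i ∈ Finset.range m, d i :=
      ih (fun i j hij hj => hmono i j hij (by omega)) (fun k hk => hS k (by omega)) (c m)
        (fun i hi => hmono i m (by omega) (by omega))
    have h2 : 0 ≤ ∑ i ∈ Finset.range (m+1), d i := hS (m+1) le_rfl
    have hcm : c m ≤ C := hC m (by omega)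
    have h3 : c m * ∑ i ∈ Finset.range (m+1), d i ≤ C * ∑ i ∈ Finset.range (m+1), d i :=
      mul_le_mul_of_nonneg_right hcm h2
    rw [Finset.sum_range_succ] at h3 ⊢
    rw [Finset.sum_range_succ d m]
    nlinarith

lemma finbound' (p q : ℕ → ℝ) (hp0 : ∀ i, 0 ≤ p i)
    (hmaj : ∀ k : ℕ, (∑ i ∈ Finset.range k, q i) ≤ ∑ i ∈ Finset.range k, p i)
    (hqa : Antitone q) (m : ℕ) (hpos : ∀ i, i < m → 0 < q i)
    (C : ℝ) (hC : ∀ i, i < m → -Real.log (q i) - 1 ≤ C) :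
    ∑ i ∈ Finset.range m, Real.negMulLog (p i) ≤ ∑ i ∈ Finset.range m, Real.negMulLog (q i)
      + C * (∑ i ∈ Finset.range m, p i - ∑ i ∈ Finset.range m, q i) := by
  have step1 : ∑ i ∈ Finset.range m, Real.negMulLog (p i) ≤
      ∑ i ∈ Finset.range m, (Real.negMulLog (q i) + (-Real.log (q i) - 1) * (p i - q i)) := by
    apply Finset.sum_le_sum
    intro i hi
    exact ptwise' (hp0 i) (hpos i (Finset.mem_range.mp hi))
  rw [Finset.sum_add_distrib] at step1
  have step2 : ∑ i ∈ Finset.range m, (-Real.log (q i) - 1) * (p i - q i) ≤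
      C * ∑ i ∈ Finset.range m, (p i - q i) := by
    apply abel'
    · intro i j hij hj
      have : Real.log (q j) ≤ Real.log (q i) := Real.log_le_log (hpos j hj) (hqa hij)
      linarith
    · intro k hk
      rw [Finset.sum_sub_distrib]
      linarith [hmaj k]
    · exact hC
  rw [Finset.sum_sub_distrib] at step2
  linarith

lemma key' (p q : ℕ → ℝ)
    (hp0 : ∀ i, 0 ≤ p i) (hq0 : ∀ i, 0 ≤ q i)
    (hqa : Antitone q)
    (hps : Summable p) (hqs : Summable q)
    (hp1 : (∑' i, p i) = 1) (hq1 : (∑' i, q i) = 1)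
    (hmaj : ∀ k : ℕ, (∑ i ∈ Finset.range k, q i) ≤ ∑ i ∈ Finset.range k, p i)
    (hgs : Summable (fun i => Real.negMulLog (q i))) (n : ℕ) :
    ∑ i ∈ Finset.range n, Real.negMulLog (p i) ≤ ∑' i, Real.negMulLog (q i) := by
  have hple : ∀ i, p i ≤ 1 := fun i => hp1 ▸ Summable.le_tsum hps i (fun j _ => hp0 j)
  have hqle : ∀ i, q i ≤ 1 := fun i => hq1 ▸ Summable.le_tsum hqs i (fun j _ => hq0 j)
  have hf0 : ∀ i, 0 ≤ Real.negMulLog (p i) := fun i => Real.negMulLog_nonneg (hp0 i) (hple i)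
  have hg0 : ∀ i, 0 ≤ Real.negMulLog (q i) := fun i => Real.negMulLog_nonneg (hq0 i) (hqle i)
  have hpsum_le : ∀ k, ∑ i ∈ Finset.range k, p i ≤ 1 := fun k =>
    hp1 ▸ Summable.sum_le_tsum _ (fun i _ => hp0 i) hps
  by_cases hzero : ∃ N, q N = 0
  · classical
    set N := Nat.find hzero with hNdef
    have hqN : q N = 0 := Nat.find_spec hzero
    have hpos : ∀ i, i < N → 0 < q i := fun i hi =>
      lt_of_le_of_ne (hq0 i) (Ne.symm (Nat.find_min hzero hi))
    have hN1 : 1 ≤ N := by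
      by_contra h
      have hN0 : N = 0 := by omega
      have hq00 : ∀ i, q i = 0 := fun i =>
        le_antisymm (le_trans (hqa (Nat.zero_le i)) (le_of_eq (hN0 ▸ hqN))) (hq0 i)
      have : (∑' i, q i) = 0 := by simp [hq00]
      rw [hq1] at this
      norm_num at this
    have hqtail0 : ∀ i, q (i + N) = 0 := fun i =>
      le_antisymm (hqN ▸ hqa (Nat.le_add_left N i)) (hq0 _)
    have hsumqN : ∑ i ∈ Finset.range N, q i = 1 := by
      have h := Summable.sum_add_tsum_nat_add N hqs
      rw [hq1] at h
      simpa [hqtail0] using h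
    have hsumpN : ∑ i ∈ Finset.range N, p i = 1 :=
      le_antisymm (hpsum_le N) (hsumqN ▸ hmaj N)
    have hptail0 : ∀ i, N ≤ i → p i = 0 := by
      have hsum : Summable (fun i => p (i + N)) := (summable_nat_add_iff N).mpr hps
      have htail : (∑' i, p (i + N)) = 0 := by
        have h := Summable.sum_add_tsum_nat_add N hps
        rw [hp1, hsumpN] at h
        linarith
      intro i hi
      have h2 := Summable.le_tsum hsum (i - N) (fun j _ => hp0 _)
      rw [htail] at h2
      have h3 : p i ≤ 0 := by simpa [Nat.sub_add_cancel hi] using h2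
      exact le_antisymm h3 (hp0 i)
    have hfin : ∑ i ∈ Finset.range N, Real.negMulLog (p i) ≤
        ∑ i ∈ Finset.range N, Real.negMulLog (q i) := by
      have hC : ∀ i, i < N → -Real.log (q i) - 1 ≤ -Real.log (q (N-1)) - 1 := by
        intro i hi
        have h1 : Real.log (q (N-1)) ≤ Real.log (q i) :=
          Real.log_le_log (hpos (N-1) (by omega)) (hqa (by omega))
        linarith
      have h := finbound' p q hp0 hmaj hqa N hpos (-Real.log (q (N-1)) - 1) hC
      rw [hsumpN, hsumqN] at h
      simpa using h
    calc ∑ i ∈ Finset.range n, Real.negMulLog (p i)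
        ≤ ∑ i ∈ Finset.range (max n N), Real.negMulLog (p i) :=
          Finset.sum_le_sum_of_subset_of_nonneg
            (Finset.range_subset_range.mpr (le_max_left n N)) (fun i _ _ => hf0 i)
      _ = ∑ i ∈ Finset.range N, Real.negMulLog (p i) := by
          refine (Finset.sum_subset (Finset.range_subset_range.mpr (le_max_right n N)) ?_).symm
          intro x _ hx
          have hNx : N ≤ x := by
            by_contra h
            exact hx (Finset.mem_range.mpr (by omega))
          rw [hptail0 x hNx, Real.negMulLog_zero]
      _ ≤ ∑ i ∈ Finset.range N, Real.negMulLog (q i) := hfin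
      _ ≤ ∑' i, Real.negMulLog (q i) := Summable.sum_le_tsum _ (fun i _ => hg0 i) hgs
  · push_neg at hzero
    have hpos : ∀ i, 0 < q i := fun i => lt_of_le_of_ne (hq0 i) (Ne.symm (hzero i))
    apply le_of_forall_pos_le_add
    intro ε hε
    set Hq := ∑' i, Real.negMulLog (q i) with hHq
    have htend : Filter.Tendsto (fun m => ∑ i ∈ Finset.range m, Real.negMulLog (q i))
        Filter.atTop (nhds Hq) := hgs.hasSum.tendsto_sum_nat
    have hev : ∀ᶠ m in Filter.atTop,
        Hq - ε < ∑ i ∈ Finset.range m, Real.negMulLog (q i) :=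
      htend.eventually (eventually_gt_nhds (by linarith))
    obtain ⟨m, hm2, hm1⟩ := (hev.and (Filter.eventually_ge_atTop n)).exists
    -- tail of g is < ε
    have htailg : (∑' i, Real.negMulLog (q (i + m))) < ε := by
      have h := Summable.sum_add_tsum_nat_add m hgs
      rw [← hHq] at h
      linarith
    set C := -Real.log (q m) - 1 with hCdef
    have hC : ∀ i, i < m → -Real.log (q i) - 1 ≤ C := by
      intro i hi
      have h1 : Real.log (q m) ≤ Real.log (q i) := Real.log_le_log (hpos m) (hqa (by omega))
      rw [hCdef]; linarith
    have hfb := finbound' p q hp0 hmaj hqa m (fun i _ => hpos i) C hC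
    have hCS : C * (∑ i ∈ Finset.range m, p i - ∑ i ∈ Finset.range m, q i) ≤ ε := by
      set S := ∑ i ∈ Finset.range m, p i - ∑ i ∈ Finset.range m, q i with hSdef
      have hS0 : 0 ≤ S := by rw [hSdef]; linarith [hmaj m]
      have hqtsum : ∑ i ∈ Finset.range m, q i + ∑' i, q (i + m) = 1 := by
        rw [← hq1]; exact Summable.sum_add_tsum_nat_add m hqs
      have hST : S ≤ ∑' i, q (i + m) := by
        rw [hSdef]; linarith [hpsum_le m]
      rcases le_or_gt C 0 with hC0 | hC0
      · have := mul_nonpos_of_nonpos_of_nonneg hC0 hS0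
        linarith
      · have hqtailsum : Summable (fun i => q (i + m)) := (summable_nat_add_iff m).mpr hqs
        have hgtailsum : Summable (fun i => Real.negMulLog (q (i + m))) :=
          (summable_nat_add_iff m).mpr hgs
        have hpt : ∀ i, C * q (i + m) ≤ Real.negMulLog (q (i + m)) := by
          intro i
          have h1 : Real.log (q (i + m)) ≤ Real.log (q m) :=
            Real.log_le_log (hpos (i + m)) (hqa (Nat.le_add_left m i))
          have h2 : C ≤ -Real.log (q (i + m)) := by rw [hCdef]; linarith
          have h3 := mul_le_mul_of_nonneg_right h2 (hq0 (i + m))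
          simp only [Real.negMulLog]
          nlinarith
        have h4 : C * (∑' i, q (i + m)) ≤ ∑' i, Real.negMulLog (q (i + m)) := by
          rw [← tsum_mul_left]
          exact Summable.tsum_le_tsum hpt (hqtailsum.mul_left C) hgtailsum
        have h5 : C * S ≤ C * (∑' i, q (i + m)) :=
          mul_le_mul_of_nonneg_left hST (le_of_lt hC0)
        linarith
    have hglem : ∑ i ∈ Finset.range m, Real.negMulLog (q i) ≤ Hq :=
      Summable.sum_le_tsum _ (fun i _ => hg0 i) hgs
    calc ∑ i ∈ Finset.range n, Real.negMulLog (p i)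
        ≤ ∑ i ∈ Finset.range m, Real.negMulLog (p i) :=
          Finset.sum_le_sum_of_subset_of_nonneg
            (Finset.range_subset_range.mpr hm1) (fun i _ _ => hf0 i)
      _ ≤ Hq + ε := by linarith

/-- If `p` and `q` are probability distributions on `ℕ` with entries in
nonincreasing order and `p` majorizes `q` (partial sums of `p` dominate those of `q`),
then the Shannon entropy satisfies `H(p) ≤ H(q)`.  Entropies are computed as
`∑' i, -p i * log (p i)` in `ℝ≥0∞` (so that possibly infinite entropies are handled). -/
theorem stmt5 (p q : ℕ → ℝ)
    (hp0 : ∀ i, 0 ≤ p i) (hq0 : ∀ i, 0 ≤ q i)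
    (hpa : Antitone p) (hqa : Antitone q)
    (hps : Summable p) (hqs : Summable q)
    (hp1 : (∑' i, p i) = 1) (hq1 : (∑' i, q i) = 1)
    (hmaj : ∀ k : ℕ, (∑ i ∈ Finset.range k, q i) ≤ ∑ i ∈ Finset.range k, p i) :
    (∑' i, ENNReal.ofReal (Real.negMulLog (p i))) ≤
      ∑' i, ENNReal.ofReal (Real.negMulLog (q i)) := by
  have hple : ∀ i, p i ≤ 1 := fun i => hp1 ▸ Summable.le_tsum hps i (fun j _ => hp0 j)
  have hqle : ∀ i, q i ≤ 1 := fun i => hq1 ▸ Summable.le_tsum hqs i (fun j _ => hq0 j)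
  have hf0 : ∀ i, 0 ≤ Real.negMulLog (p i) := fun i => Real.negMulLog_nonneg (hp0 i) (hple i)
  have hg0 : ∀ i, 0 ≤ Real.negMulLog (q i) := fun i => Real.negMulLog_nonneg (hq0 i) (hqle i)
  by_cases hgs : Summable (fun i => Real.negMulLog (q i))
  · rw [← ENNReal.ofReal_tsum_of_nonneg hg0 hgs, ENNReal.tsum_eq_iSup_sum]
    apply iSup_le
    intro s
    obtain ⟨n, hs⟩ := s.exists_nat_subset_range
    rw [← ENNReal.ofReal_sum_of_nonneg (fun i _ => hf0 i)]
    apply ENNReal.ofReal_le_ofReal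
    calc ∑ i ∈ s, Real.negMulLog (p i)
        ≤ ∑ i ∈ Finset.range n, Real.negMulLog (p i) :=
          Finset.sum_le_sum_of_subset_of_nonneg hs (fun i _ _ => hf0 i)
      _ ≤ ∑' i, Real.negMulLog (q i) :=
          key' p q hp0 hq0 hqa hps hqs hp1 hq1 hmaj hgs n
  · have htop : ∑' i, ENNReal.ofReal (Real.negMulLog (q i)) = ⊤ := by
      by_contra h
      apply hgs
      have h2 := ENNReal.summable_toReal h
      have h3 : (fun i => (ENNReal.ofReal (Real.negMulLog (q i))).toReal)
          = fun i => Real.negMulLog (q i) := by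
        funext i
        exact ENNReal.toReal_ofReal (hg0 i)
      rwa [h3] at h2
    rw [htop]
    exact le_top
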